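/- For a complete set of d+1 mutually unbiased bases of ℂ^d, the map Π_a(V) = Σ_{b=0}^{d−1} |ψ^a_b⟩⟨ψ^a_b| V |ψ^a_b⟩⟨ψ^a_b| acts as the identity on W_a and annihilates W_{a'} for a' ≠ a; hence {Π_a} is a complete family of orthogonal projections of the traceless Hermitian operators W onto its subspaces W_a. -/

import Mathlib

open Matrix BigOperators

/-- Membership in the subspace `W_a` attached to the `a`-th mutually unbiased basis:
real traceless combinations of the rank-one projectors onto the basis states. -/
def mubW (d : ℕ) (ψ : Fin (d + 1) → Fin d → (Fin d → ℂ)) (a : Fin (d + 1))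
    (X : Matrix (Fin d) (Fin d) ℂ) : Prop :=
  ∃ r : Fin d → ℝ, (∑ b, r b) = 0 ∧
    X = ∑ b, (r b : ℂ) • Matrix.vecMulVec (ψ a b) (star (ψ a b))

/-- The map `Π_a(V) = ∑_b ⟨ψ^a_b|V|ψ^a_b⟩ |ψ^a_b⟩⟨ψ^a_b|`. -/
noncomputable def mubProj (d : ℕ) (ψ : Fin (d + 1) → Fin d → (Fin d → ℂ))
    (a : Fin (d + 1)) (V : Matrix (Fin d) (Fin d) ℂ) : Matrix (Fin d) (Fin d) ℂ :=
  ∑ b, (star (ψ a b) ⬝ᵥ (V *ᵥ ψ a b)) • Matrix.vecMulVec (ψ a b) (star (ψ a b))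

lemma mub_aux1 (d : ℕ) (v w u : Fin d → ℂ) :
    (Matrix.vecMulVec v w) *ᵥ u = (w ⬝ᵥ u) • v := by
  ext i
  simp only [Matrix.vecMulVec, Matrix.mulVec, dotProduct, Matrix.of_apply, Pi.smul_apply,
    smul_eq_mul]
  rw [Finset.sum_mul]
  exact Finset.sum_congr rfl fun x _ => by ring

lemma mub_aux2 (d : ℕ) (u v : Fin d → ℂ) : star v ⬝ᵥ u = starRingEnd ℂ (star u ⬝ᵥ v) := by
  simp [dotProduct, map_sum, mul_comm]

lemma mub_keylem (d : ℕ) (u v : Fin d → ℂ) :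
    star u ⬝ᵥ ((Matrix.vecMulVec v (star v)) *ᵥ u)
      = ((‖star u ⬝ᵥ v‖)^2 : ℝ) := by
  rw [mub_aux1, dotProduct_smul, mub_aux2, smul_eq_mul, mul_comm, Complex.mul_conj,
    Complex.sq_norm]

theorem mubProj_is_orthogonal_projection
    (d : ℕ) (ψ : Fin (d + 1) → Fin d → (Fin d → ℂ))
    (hMUB : ∀ a b a' b', ‖star (ψ a b) ⬝ᵥ ψ a' b'‖ =
      if a = a' ∧ b = b' then 1 else if a = a' then 0 else 1 / Real.sqrt d) :
    (∀ a X, mubW d ψ a X → mubProj d ψ a X = X) ∧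
    (∀ a a' : Fin (d + 1), a ≠ a' → ∀ X, mubW d ψ a' X → mubProj d ψ a X = 0) := by
  have key : ∀ (a a' : Fin (d+1)) (b b' : Fin d),
      star (ψ a b) ⬝ᵥ ((Matrix.vecMulVec (ψ a' b') (star (ψ a' b'))) *ᵥ ψ a b)
        = if a = a' ∧ b = b' then 1 else if a = a' then 0 else ((d : ℂ))⁻¹ := by
    intro a a' b b'
    have hd : (0:ℝ) < d := by
      exact_mod_cast lt_of_le_of_lt (Nat.zero_le _) b.2
    rw [mub_keylem, hMUB]
    split_ifs with h1 h2
    · norm_num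
    · norm_num
    · rw [div_pow, one_pow, Real.sq_sqrt hd.le]
      push_cast
      rw [one_div]
  have expand : ∀ (a a' : Fin (d+1)) (r : Fin d → ℝ) (b : Fin d),
      star (ψ a b) ⬝ᵥ ((∑ b', (r b' : ℂ) • Matrix.vecMulVec (ψ a' b') (star (ψ a' b'))) *ᵥ ψ a b)
        = ∑ b', (r b' : ℂ) *
            (star (ψ a b) ⬝ᵥ (Matrix.vecMulVec (ψ a' b') (star (ψ a' b')) *ᵥ ψ a b)) := by
    intro a a' r b
    have sum_mv : (∑ b', (r b' : ℂ) • Matrix.vecMulVec (ψ a' b') (star (ψ a' b'))) *ᵥ ψ a b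
        = ∑ b', ((r b' : ℂ) • Matrix.vecMulVec (ψ a' b') (star (ψ a' b'))) *ᵥ ψ a b := by
      ext i
      simp only [Matrix.mulVec, dotProduct, Finset.sum_apply, Matrix.sum_apply, Finset.sum_mul]
      rw [Finset.sum_comm]
    have dp_sum : ∀ (u : Fin d → ℂ) (f : Fin d → Fin d → ℂ),
        u ⬝ᵥ (∑ b', f b') = ∑ b', u ⬝ᵥ f b' := by
      intro u f
      simp only [dotProduct, Finset.sum_apply, Finset.mul_sum]
      exact Finset.sum_comm ..
    rw [sum_mv, dp_sum]
    exact Finset.sum_congr rfl fun b' _ => by rw [Matrix.smul_mulVec, dotProduct_smul,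
      smul_eq_mul]
  constructor
  · rintro a X ⟨r, hr, hX⟩
    subst hX
    refine Finset.sum_congr rfl fun b _ => ?_
    congr 1
    rw [expand]
    simp only [key]
    simp
  · rintro a a' hne X ⟨r, hr, hX⟩
    subst hX
    unfold mubProj
    refine Finset.sum_eq_zero fun b _ => ?_
    rw [expand]
    have : ∀ b' : Fin d, (r b' : ℂ) *
        (star (ψ a b) ⬝ᵥ (Matrix.vecMulVec (ψ a' b') (star (ψ a' b')) *ᵥ ψ a b))
        = (r b' : ℂ) * ((d : ℂ))⁻¹ := by
      intro b'
      rw [key]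
      simp [hne]
    rw [Finset.sum_congr rfl fun b' _ => this b', ← Finset.sum_mul]
    have hr' : (∑ b', (r b' : ℂ)) = 0 := by
      rw [← Complex.ofReal_sum, hr, Complex.ofReal_zero]
    rw [hr', zero_mul, zero_smul]
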